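/- Let A be an infinite-dimensional right vector space over a division ring F and let S = End(A_F) be its ring of F-linear endomorphisms equipped with the finite topology 𝒯_fin. Then (S, 𝒯_fin) is a minimal topological ring: every Hausdorff ring topology on S coarser than 𝒯_fin equals 𝒯_fin. -/

import Mathlib

/-- The finite topology (topology of pointwise convergence) on the endomorphism
ring of a module `M` over `R`: the topology induced by the inclusion
`End(M) → (M → M)` where `M` carries the discrete topology. -/
def moduleEndFinTop (R M : Type*) [Semiring R] [AddCommMonoid M] [Module R M] :
    TopologicalSpace (Module.End R M) :=
  TopologicalSpace.induced (fun α : Module.End R M => (α : M → M))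
    (@Pi.topologicalSpace _ _ (fun _ => ⊥))

section Aux

open Filter Set Module

variable {F A : Type*} [DivisionRing F] [AddCommGroup A] [Module F A]

/-- Over a division ring, any vector not in a subspace `B` admits a linear functional
taking value `1` there and vanishing on `B`. -/
lemma exists_dual_ann (B : Submodule F A) {c : A} (hc : c ∉ B) :
    ∃ ψ : A →ₗ[F] F, ψ c = 1 ∧ ∀ b ∈ B, ψ b = 0 := by
  set v : A ⧸ B := B.mkQ c with hv
  have hv0 : v ≠ 0 := by
    simpa [hv, Submodule.mkQ_apply, Submodule.Quotient.mk_eq_zero] using hc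
  obtain ⟨q, hq⟩ := (Submodule.span F {v}).exists_isCompl
  let π := Submodule.linearProjOfIsCompl _ q hq
  let eqv := LinearEquiv.toSpanNonzeroSingleton F (A ⧸ B) v hv0
  refine ⟨(eqv.symm.toLinearMap ∘ₗ π) ∘ₗ B.mkQ, ?_, ?_⟩
  · have h1 : π v = ⟨v, Submodule.mem_span_singleton_self v⟩ :=
      Submodule.linearProjOfIsCompl_apply_left hq ⟨v, Submodule.mem_span_singleton_self v⟩
    have h2 : eqv 1 = ⟨v, Submodule.mem_span_singleton_self v⟩ := by
      ext; simp [eqv]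
    simp only [LinearMap.comp_apply, Submodule.mkQ_apply, ← hv, h1, ← h2,
      LinearEquiv.coe_coe, LinearEquiv.symm_apply_apply]
  · intro b hb
    simp [Submodule.Quotient.mk_eq_zero B |>.2 hb, π, Submodule.mkQ_apply,
      (Submodule.Quotient.mk_eq_zero B).2 hb]

/-- Neighborhoods in the finite topology contain sets determined by finitely many vectors. -/
lemma mem_nhds_finTop {α : Module.End F A} {U : Set (Module.End F A)}
    (hU : U ∈ @nhds _ (moduleEndFinTop F A) α) :
    ∃ I : Set A, I.Finite ∧ {β : Module.End F A | ∀ k ∈ I, β k = α k} ⊆ U := by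
  letI : TopologicalSpace A := ⊥
  haveI : DiscreteTopology A := ⟨rfl⟩
  rw [show moduleEndFinTop F A =
      TopologicalSpace.induced (fun α : Module.End F A => (α : A → A)) Pi.topologicalSpace
      from rfl, nhds_induced] at hU
  obtain ⟨V, hV, hVU⟩ := hU
  rw [nhds_pi] at hV
  simp only [nhds_discrete] at hV
  obtain ⟨I, hIfin, t, ht, htV⟩ := Filter.mem_pi.1 hV
  refine ⟨I, hIfin, fun β hβ => hVU ?_⟩
  refine mem_preimage.2 (htV fun i hi => ?_)
  have := ht i
  rw [Filter.mem_pure] at this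
  simpa [hβ i hi] using this

/-- The key step: under a Hausdorff ring topology whose neighborhoods of zero all
contain annihilators of finite sets, the annihilator of each single vector is itself
a neighborhood of zero. -/
lemma key_nhds (h : Cardinal.aleph0 ≤ Module.rank F A)
    [TopologicalSpace (Module.End F A)]
    [IsTopologicalRing (Module.End F A)] [T2Space (Module.End F A)]
    (hT : ∀ U ∈ nhds (0 : Module.End F A),
      ∃ I : Set A, I.Finite ∧ {β : Module.End F A | ∀ k ∈ I, β k = 0} ⊆ U)
    (a : A) : {α : Module.End F A | α a = 0} ∈ nhds (0 : Module.End F A) := by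
  by_cases ha : a = 0
  · refine Filter.mem_of_superset univ_mem fun α _ => ?_
    simp [ha]
  -- a functional φ with φ a = 1, and the rank-one idempotent e = a ⊗ φ
  obtain ⟨φ, hφa, -⟩ := exists_dual_ann (⊥ : Submodule F A) (by simpa using ha)
  set e : Module.End F A := φ.smulRight a with he_def
  have hea : e a = a := by simp [he_def, hφa]
  have he0 : e ≠ 0 := fun H => ha (by rw [← hea, H]; simp)
  -- a neighborhood of 0 avoiding e
  have hU0 : {e}ᶜ ∈ nhds (0 : Module.End F A) :=
    isOpen_compl_singleton.mem_nhds (by simpa using he0.symm)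
  -- U₁ with U₁ * U₁ ⊆ {e}ᶜ
  have hmul : Filter.Tendsto (fun p : Module.End F A × Module.End F A => p.1 * p.2)
      (nhds 0 ×ˢ nhds 0) (nhds 0) := by
    have := (continuous_mul (M := Module.End F A)).tendsto ((0 : Module.End F A), 0)
    rwa [nhds_prod_eq, zero_mul] at this
  obtain ⟨U, hU, V, hV, hUV⟩ := Filter.mem_prod_iff.1 (hmul hU0)
  set U₁ := U ∩ V with hU₁def
  have hU₁ : U₁ ∈ nhds (0 : Module.End F A) := Filter.inter_mem hU hV
  have hU₁mul : ∀ x ∈ U₁, ∀ y ∈ U₁, x * y ≠ e := by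
    intro x hx y hy
    have : (x, y) ∈ U ×ˢ V := ⟨hx.1, hy.2⟩
    exact hUV this
  -- a finite set I with T(I) ⊆ U₁; B = span I is finite dimensional
  obtain ⟨I, hIfin, hIU⟩ := hT U₁ hU₁
  set B : Submodule F A := Submodule.span F I with hBdef
  haveI : Module.Finite F B := Module.Finite.span_of_finite F hIfin
  obtain ⟨C, hBC⟩ := B.exists_isCompl
  -- rank C = rank A, so there is a linear embedding g of A onto C
  have hrksum : Module.rank F B + Module.rank F C = Module.rank F A := by
    rw [← rank_prod']
    exact (Submodule.prodEquivOfIsCompl B C hBC).rank_eq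
  have hrkB : Module.rank F B < Cardinal.aleph0 := Module.rank_lt_aleph0 F B
  have hrkC : Cardinal.aleph0 ≤ Module.rank F C := by
    by_contra hlt
    push_neg at hlt
    exact absurd (hrksum ▸ h) (not_le.2 (Cardinal.add_lt_aleph0 hrkB hlt))
  have hrk : Module.rank F A = Module.rank F C := by
    rw [← hrksum, Cardinal.add_eq_right hrkC (le_of_lt (lt_of_lt_of_le hrkB hrkC))]
  have hidx : Nonempty (Module.Free.ChooseBasisIndex F A ≃ Module.Free.ChooseBasisIndex F C) := by
    apply Cardinal.eq.1
    rw [← Module.Free.rank_eq_card_chooseBasisIndex, ← Module.Free.rank_eq_card_chooseBasisIndex]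
    exact hrk
  let eqAC : A ≃ₗ[F] C :=
    Basis.equiv (Module.Free.chooseBasis F A) (Module.Free.chooseBasis F C) hidx.some
  set g : Module.End F A := C.subtype ∘ₗ (eqAC : A →ₗ[F] C) with hgdef
  have hg : ∀ c : A, c ≠ 0 → g c ∉ B ∧ g c ≠ 0 := by
    intro c hc
    have hmem : g c ∈ C := (eqAC c).2
    have hne : g c ≠ 0 := by
      simp only [hgdef, LinearMap.comp_apply, Submodule.subtype_apply]
      intro H
      exact hc (by simpa using eqAC.injective (Subtype.ext (by simpa using H)))
    refine ⟨fun hB => hne ?_, hne⟩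
    exact (Submodule.disjoint_def.1 hBC.disjoint) _ hB hmem
  -- pull U₁ back through the continuous maps x ↦ g * x and x ↦ x * e
  have hV' : (fun x => g * x) ⁻¹' U₁ ∈ nhds (0 : Module.End F A) := by
    have hc : ContinuousAt (fun x => g * x) (0 : Module.End F A) :=
      (continuous_mul_left g).continuousAt
    have : g * (0 : Module.End F A) = 0 := mul_zero g
    exact hc.preimage_mem_nhds (by rwa [this])
  have hZ : (fun x => x * e) ⁻¹' ((fun x => g * x) ⁻¹' U₁) ∈ nhds (0 : Module.End F A) := by
    have hc : ContinuousAt (fun x => x * e) (0 : Module.End F A) :=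
      (continuous_mul_right e).continuousAt
    have : (0 : Module.End F A) * e = 0 := zero_mul e
    exact hc.preimage_mem_nhds (by rwa [this])
  refine Filter.mem_of_superset hZ fun α hα => ?_
  -- if α a = c ≠ 0 we produce a factorization of e through U₁ * U₁, a contradiction
  by_contra hαa
  set c : A := α a with hcdef
  have hc : c ≠ 0 := hαa
  have hαe : α * e = φ.smulRight c := by
    ext x
    simp [he_def, Module.End.mul_apply, hcdef]
  have h1 : g * (φ.smulRight c) ∈ U₁ := by
    have := hα
    rwa [Set.mem_preimage, Set.mem_preimage, hαe] at this
  have hgc : g * (φ.smulRight c) = φ.smulRight (g c) := by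
    ext x; simp [Module.End.mul_apply]
  rw [hgc] at h1
  obtain ⟨hgcB, hgc0⟩ := hg c hc
  obtain ⟨ψ, hψc, hψB⟩ := exists_dual_ann B hgcB
  have hσ : ψ.smulRight a ∈ U₁ := by
    apply hIU
    intro k hk
    simp [hψB k (Submodule.subset_span hk)]
  have : (ψ.smulRight a) * (φ.smulRight (g c)) = e := by
    ext x
    simp [Module.End.mul_apply, he_def, map_smul, hψc, smul_smul]
  exact hU₁mul _ hσ _ h1 this

end Aux

/-- The endomorphism ring of an infinite-dimensional vector space over a division
ring, equipped with the finite topology, is a minimal topological ring: every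
Hausdorff ring topology coarser than the finite topology equals it. -/
theorem end_finTop_minimal {F A : Type*} [DivisionRing F] [AddCommGroup A]
    [Module F A] (h : Cardinal.aleph0 ≤ Module.rank F A)
    (t' : TopologicalSpace (Module.End F A))
    (htr : @IsTopologicalRing (Module.End F A) t' _)
    (ht2 : @T2Space (Module.End F A) t')
    (hcoarser : moduleEndFinTop F A ≤ t') :
    t' = moduleEndFinTop F A := by
  letI := t'
  haveI := htr
  haveI := ht2
  -- every t'-neighborhood of 0 is a finite-topology neighborhood
  have hT : ∀ U ∈ nhds (0 : Module.End F A),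
      ∃ I : Set A, I.Finite ∧ {β : Module.End F A | ∀ k ∈ I, β k = 0} ⊆ U := by
    intro U hU
    have hUfin : U ∈ @nhds _ (moduleEndFinTop F A) 0 := nhds_mono hcoarser hU
    obtain ⟨I, hIfin, hIU⟩ := mem_nhds_finTop hUfin
    exact ⟨I, hIfin, by simpa using hIU⟩
  have key := key_nhds h hT
  refine le_antisymm (isOpen_implies_isOpen_iff.mp ?_) hcoarser
  intro U hUopen
  rw [isOpen_iff_mem_nhds]
  intro α hα
  have hUn : U ∈ @nhds _ (moduleEndFinTop F A) α :=
    @IsOpen.mem_nhds _ (moduleEndFinTop F A) α U hUopen hα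
  obtain ⟨I, hIfin, hIU⟩ := mem_nhds_finTop hUn
  -- T(I) is a t'-neighborhood of 0
  have hTI : {γ : Module.End F A | ∀ k ∈ I, γ k = 0} ∈ nhds (0 : Module.End F A) := by
    have : {γ : Module.End F A | ∀ k ∈ I, γ k = 0} = ⋂ k ∈ I, {γ : Module.End F A | γ k = 0} := by
      ext γ; simp
    rw [this]
    exact (Filter.biInter_mem hIfin).2 fun k _ => key k
  -- translate it to α
  have hsub : Filter.Tendsto (fun β : Module.End F A => β - α) (nhds α) (nhds 0) := by
    have := ((continuous_id.sub (continuous_const (y := α)))).tendsto α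
    simpa [Pi.sub_def] using this
  refine Filter.mem_of_superset (hsub hTI) fun β hβ => hIU fun k hk => ?_
  have : (β - α) k = 0 := hβ k hk
  rw [LinearMap.sub_apply] at this
  exact sub_eq_zero.1 this
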